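/- If D ≥ 1 is the diameter of an initial connected configuration of n particles and the target line has length n - 1 > D, then at least one particle must move distance at least (n-1-D)/2, and more generally the k-th largest required displacement is at least (n - 1 - D)/2 - (k-1) for each k with this quantity positive; summing yields a lower bound of Σ_{k : (n-1-D)/2 - (k-1) > 0} ((n-1-D)/2 - (k-1)) on the total displacement. -/

import Mathlib

/-- The infinite equilateral triangular grid graph on `ℤ × ℤ`. -/
def Geqt : SimpleGraph (ℤ × ℤ) :=
  SimpleGraph.fromRel (fun v w => w - v ∈ ({(1, 0), (0, 1), (1, 1)} : Set (ℤ × ℤ)))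

/-- The six lattice directions along which a straight line in the triangular grid can run. -/
def lineDirs : Set (ℤ × ℤ) :=
  {(1, 0), (0, 1), (1, 1), (-1, 0), (0, -1), (-1, -1)}

lemma Geqt_adj_step (v d : ℤ × ℤ) (hd : d ∈ ({(1,0),(0,1),(1,1)} : Set (ℤ × ℤ))) :
    Geqt.Adj v (v + d) := by
  rw [Geqt, SimpleGraph.fromRel_adj]
  constructor
  · rcases hd with h | h | h <;> subst h <;> intro hc <;>
      simpa [Prod.ext_iff] using hc.symm
  · left; simpa using hd

lemma Geqt_reach (u v : ℤ × ℤ) : Geqt.Reachable u v := by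
  have h1 : ∀ (w : ℤ × ℤ) (a : ℤ), Geqt.Reachable w (w + (a, 0)) := by
    intro w a
    induction a using Int.induction_on with
    | zero => convert @SimpleGraph.Reachable.refl _ Geqt w using 2 <;> simp [Prod.ext_iff]
    | succ i ih =>
        refine ih.trans ?_
        have := (Geqt_adj_step (w + ((i:ℤ), 0)) (1,0) (by simp)).reachable
        have he : w + ((i : ℤ), 0) + (1, 0) = w + ((i : ℤ) + 1, 0) := by
          simp [Prod.ext_iff]; ring
        rwa [he] at this
    | pred i ih =>
        refine ih.trans ?_
        have := (Geqt_adj_step (w + (-(i : ℤ) - 1, 0)) (1,0) (by simp)).reachable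
        have he : w + (-(i : ℤ) - 1, 0) + (1, 0) = w + (-(i : ℤ), 0) := by
          simp [Prod.ext_iff]; ring
        rw [he] at this
        exact this.symm
  have h2 : ∀ (w : ℤ × ℤ) (b : ℤ), Geqt.Reachable w (w + (0, b)) := by
    intro w b
    induction b using Int.induction_on with
    | zero => convert @SimpleGraph.Reachable.refl _ Geqt w using 2 <;> simp [Prod.ext_iff]
    | succ i ih =>
        refine ih.trans ?_
        have := (Geqt_adj_step (w + (0, (i : ℤ))) (0,1) (by simp)).reachable
        have he : w + (0, (i : ℤ)) + (0, 1) = w + (0, (i : ℤ) + 1) := by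
          simp [Prod.ext_iff]; ring
        rwa [he] at this
    | pred i ih =>
        refine ih.trans ?_
        have := (Geqt_adj_step (w + (0, -(i : ℤ) - 1)) (0,1) (by simp)).reachable
        have he : w + (0, -(i : ℤ) - 1) + (0, 1) = w + (0, -(i : ℤ)) := by
          simp [Prod.ext_iff]; ring
        rw [he] at this
        exact this.symm
  have := (h1 u (v.1 - u.1)).trans (h2 (u + (v.1 - u.1, 0)) (v.2 - u.2))
  have he : u + (v.1 - u.1, 0) + (0, v.2 - u.2) = v := by
    simp [Prod.ext_iff]
  rwa [he] at this

lemma Geqt_connected : Geqt.Connected := by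
  rw [SimpleGraph.connected_iff]
  exact ⟨fun u v => Geqt_reach u v, ⟨(0,0)⟩⟩

lemma Geqt_adj_coord {u x : ℤ × ℤ} (h : Geqt.Adj u x) :
    |u.1 - x.1| ≤ 1 ∧ |u.2 - x.2| ≤ 1 := by
  rw [Geqt, SimpleGraph.fromRel_adj] at h
  obtain ⟨-, h | h⟩ := h <;>
    simp only [Set.mem_insert_iff, Set.mem_singleton_iff] at h <;>
    rcases h with h | h | h <;>
    · rw [Prod.ext_iff] at h
      obtain ⟨h1, h2⟩ := h
      simp only [Prod.fst_sub, Prod.snd_sub] at h1 h2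
      constructor <;> [skip; skip] <;> rw [abs_le] <;> omega

lemma Geqt_walk_coord {u v : ℤ × ℤ} (p : Geqt.Walk u v) :
    |u.1 - v.1| ≤ (p.length : ℤ) ∧ |u.2 - v.2| ≤ (p.length : ℤ) := by
  induction p with
  | nil => simp
  | cons h q ih =>
      obtain ⟨h1, h2⟩ := Geqt_adj_coord h
      obtain ⟨i1, i2⟩ := ih
      simp only [SimpleGraph.Walk.length_cons, Nat.cast_add, Nat.cast_one]
      constructor
      · calc |_ - _| ≤ |_ - _| + |_ - _| := abs_sub_le _ _ _
          _ ≤ 1 + _ := add_le_add h1 i1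
          _ = _ := by ring
      · calc |_ - _| ≤ |_ - _| + |_ - _| := abs_sub_le _ _ _
          _ ≤ 1 + _ := add_le_add h2 i2
          _ = _ := by ring

lemma Geqt_coord_le_dist (u v : ℤ × ℤ) :
    |u.1 - v.1| ≤ (Geqt.dist u v : ℤ) ∧ |u.2 - v.2| ≤ (Geqt.dist u v : ℤ) := by
  obtain ⟨p, hp⟩ := (Geqt_reach u v).exists_walk_length_eq_dist
  rw [← hp]
  exact Geqt_walk_coord p

lemma sorted_sum_lemma {n : ℕ} (hn : 0 < n) (g : Fin n → ℝ) (hg : ∀ i, 0 ≤ g i) (c : ℕ → ℝ)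
    (h : ∀ k, 1 ≤ k → k ≤ n → 0 < c k →
      ∃ T : Finset (Fin n), k ≤ T.card ∧ ∀ i ∈ T, c k ≤ g i) :
    ∑ k ∈ Finset.Icc 1 n, max 0 (c k) ≤ ∑ i, g i := by
  set σ := Tuple.sort g with hσ
  have hmono : Monotone (g ∘ σ) := Tuple.monotone_sort g
  set h' : ℕ → ℝ := fun k => g (σ ⟨(n - k) % n, Nat.mod_lt _ hn⟩) with hh'
  have key : ∀ k ∈ Finset.Icc 1 n, max 0 (c k) ≤ h' k := by
    intro k hk
    rw [Finset.mem_Icc] at hk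
    rcases le_or_gt (c k) 0 with hc | hc
    · simp only [max_le_iff, hc, true_and]
      exact ⟨hg _, le_trans hc (hg _)⟩
    rw [max_eq_right hc.le]
    by_contra hlt
    push_neg at hlt
    obtain ⟨T, hTcard, hT⟩ := h k hk.1 hk.2 hc
    have hinj : Function.Injective (fun i : Fin n => (σ.symm i : ℕ)) :=
      Fin.val_injective.comp σ.symm.injective
    have hsub : T.image (fun i => (σ.symm i : ℕ)) ⊆ Finset.Ioo ((n - k) % n) n := by
      intro m hm
      simp only [Finset.mem_image] at hm
      obtain ⟨i, hi, rfl⟩ := hm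
      rw [Finset.mem_Ioo]
      refine ⟨?_, (σ.symm i).isLt⟩
      by_contra hle
      push_neg at hle
      have : g (σ (σ.symm i)) ≤ g (σ ⟨(n - k) % n, Nat.mod_lt _ hn⟩) :=
        hmono (by exact hle)
      rw [Equiv.apply_symm_apply] at this
      exact absurd (le_trans (hT i hi) this) (not_le.mpr hlt)
    have hcard : T.card ≤ k - 1 := by
      calc T.card = (T.image (fun i => (σ.symm i : ℕ))).card :=
            (Finset.card_image_of_injective T hinj).symm
        _ ≤ (Finset.Ioo ((n - k) % n) n).card := Finset.card_le_card hsub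
        _ = n - ((n - k) % n) - 1 := by rw [Nat.card_Ioo]
        _ = k - 1 := by rw [Nat.mod_eq_of_lt (by omega)]; omega
    omega
  calc ∑ k ∈ Finset.Icc 1 n, max 0 (c k) ≤ ∑ k ∈ Finset.Icc 1 n, h' k :=
        Finset.sum_le_sum key
    _ = ∑ j : Fin n, g (σ j) := by
        refine Finset.sum_nbij' (fun k => (⟨(n - k) % n, Nat.mod_lt _ hn⟩ : Fin n))
          (fun j => n - (j : ℕ)) ?_ ?_ ?_ ?_ ?_
        · intro a _; exact Finset.mem_univ _
        · intro j _
          rw [Finset.mem_Icc]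
          have := j.isLt
          show 1 ≤ n - (j:ℕ) ∧ n - (j:ℕ) ≤ n
          omega
        · intro a ha
          rw [Finset.mem_Icc] at ha
          simp only
          rw [Nat.mod_eq_of_lt (by omega)]
          omega
        · intro j _
          have := j.isLt
          ext
          simp only
          rw [Nat.sub_sub_self (by omega), Nat.mod_eq_of_lt j.isLt]
        · intro a _; rfl
    _ = ∑ i, g i := Equiv.sum_comp σ g

/-- If `n` particles initially occupy a set of diameter `D` (in the grid metric) with
`D < n - 1` and finally occupy `n` collinear consecutive grid nodes (a line of graph-diameter
`n - 1`), then: some particle moves distance at least `(n-1-D)/2`; for each `k` with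
`(n-1-D)/2 - (k-1) > 0` at least `k` particles move distance at least `(n-1-D)/2 - (k-1)`
(the `k`-th largest displacement bound); and the total displacement is at least
`∑ₖ max 0 ((n-1-D)/2 - (k-1))`. -/
theorem line_formation_displacement_bounds (n : ℕ) (hn : 2 ≤ n) (D : ℝ) (hD : 1 ≤ D)
    (hDn : D < (n : ℝ) - 1) (init fin : Fin n → ℤ × ℤ)
    (hinj : Function.Injective init)
    (hdiam : ∀ i j, (Geqt.dist (init i) (init j) : ℝ) ≤ D)
    (hline : ∃ p d, d ∈ lineDirs ∧ ∀ i : Fin n, fin i = p + ((i : ℕ) : ℤ) • d) :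
    (∃ i, ((n : ℝ) - 1 - D) / 2 ≤ (Geqt.dist (init i) (fin i) : ℝ)) ∧
    (∀ k : ℕ, 1 ≤ k → 0 < ((n : ℝ) - 1 - D) / 2 - ((k : ℝ) - 1) →
      ∃ T : Finset (Fin n), k ≤ T.card ∧
        ∀ i ∈ T, ((n : ℝ) - 1 - D) / 2 - ((k : ℝ) - 1) ≤ (Geqt.dist (init i) (fin i) : ℝ)) ∧
    (∑ k ∈ Finset.Icc 1 n, max 0 (((n : ℝ) - 1 - D) / 2 - ((k : ℝ) - 1))
      ≤ ∑ i, (Geqt.dist (init i) (fin i) : ℝ)) := by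
  obtain ⟨p, d, hd, hfin⟩ := hline
  set M : ℝ := ((n : ℝ) - 1 - D) / 2 with hM
  set g : Fin n → ℝ := fun i => (Geqt.dist (init i) (fin i) : ℝ) with hg
  -- separation along the line
  have hsep : ∀ i j : Fin n,
      |(((i : ℕ) : ℤ)) - (((j : ℕ) : ℤ))| ≤ (Geqt.dist (fin i) (fin j) : ℤ) := by
    intro i j
    obtain ⟨c1, c2⟩ := Geqt_coord_le_dist (fin i) (fin j)
    have hx : (fin i).1 - (fin j).1 = ((((i:ℕ):ℤ)) - (((j:ℕ):ℤ))) * d.1 := by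
      rw [hfin i, hfin j]
      simp [Prod.fst_add, smul_eq_mul]
      ring
    have hy : (fin i).2 - (fin j).2 = ((((i:ℕ):ℤ)) - (((j:ℕ):ℤ))) * d.2 := by
      rw [hfin i, hfin j]
      simp [Prod.snd_add, smul_eq_mul]
      ring
    simp only [lineDirs, Set.mem_insert_iff, Set.mem_singleton_iff] at hd
    rcases hd with rfl | rfl | rfl | rfl | rfl | rfl
    · rw [hx] at c1; simpa [abs_mul] using c1
    · rw [hy] at c2; simpa [abs_mul] using c2
    · rw [hx] at c1; simpa [abs_mul] using c1
    · rw [hx] at c1; rw [abs_sub_comm]; simpa [abs_mul] using c1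
    · rw [hy] at c2; rw [abs_sub_comm]; simpa [abs_mul] using c2
    · rw [hx] at c1; rw [abs_sub_comm]; simpa [abs_mul] using c1
  have hgnn : ∀ i, 0 ≤ g i := fun i => Nat.cast_nonneg _
  -- the main counting lemma
  have main : ∀ k : ℕ, 1 ≤ k → 0 < M - ((k : ℝ) - 1) →
      k ≤ (Finset.univ.filter (fun i => M - ((k : ℝ) - 1) ≤ g i)).card := by
    intro k hk1 hkpos
    set c : ℝ := M - ((k : ℝ) - 1) with hc
    have h2k : 2 * k < n := by
      have hr : (2 * k : ℝ) < n := by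
        rw [hc, hM] at hkpos
        nlinarith
      exact_mod_cast hr
    set S : Finset (Fin n) := Finset.univ.filter (fun i => g i < c) with hS
    set T : Finset (Fin n) := Finset.univ.filter (fun i => c ≤ g i) with hT
    have hsum : S.card + T.card = n := by
      have := Finset.card_filter_add_card_filter_not
        (s := (Finset.univ : Finset (Fin n))) (p := fun i => g i < c)
      simp only [not_lt, Finset.card_univ, Fintype.card_fin] at this
      rw [hS, hT]
      convert this using 3
    have hpair : ∀ i ∈ S, ∀ j ∈ S,
        |(((i:ℕ):ℤ)) - (((j:ℕ):ℤ))| ≤ (n : ℤ) - 2 * k := by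
      intro i hi j hj
      have hgi : g i < c := (Finset.mem_filter.mp hi).2
      have hgj : g j < c := (Finset.mem_filter.mp hj).2
      have t1 : Geqt.dist (fin i) (fin j) ≤
          Geqt.dist (fin i) (init i) + Geqt.dist (init i) (init j) +
            Geqt.dist (init j) (fin j) :=
        le_trans Geqt_connected.dist_triangle
          (Nat.add_le_add_right Geqt_connected.dist_triangle _)
      have t2 : (Geqt.dist (fin i) (fin j) : ℝ) ≤ g i + D + g j := by
        have hcomm : Geqt.dist (fin i) (init i) = Geqt.dist (init i) (fin i) :=
          SimpleGraph.dist_comm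
        have hle := (Nat.cast_le (α := ℝ)).mpr t1
        rw [hcomm] at hle
        push_cast at hle
        have hdij := hdiam i j
        simp only [hg]
        linarith
      have hs := hsep i j
      have hsR : (|(((i:ℕ):ℤ)) - (((j:ℕ):ℤ))| : ℝ) < (n : ℝ) + 1 - 2 * k := by
        have h1 : (|(((i:ℕ):ℤ)) - (((j:ℕ):ℤ))| : ℝ) ≤ (Geqt.dist (fin i) (fin j) : ℝ) := by
          exact_mod_cast hs
        have h2 : g i + D + g j < c + D + c := by linarith
        have h3 : c + D + c = (n : ℝ) + 1 - 2 * k := by rw [hc, hM]; ring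
        linarith
      have hsI : |(((i:ℕ):ℤ)) - (((j:ℕ):ℤ))| < (n : ℤ) + 1 - 2 * k := by
        exact_mod_cast hsR
      omega
    have hScard : S.card ≤ n - 2 * k + 1 := by
      rcases S.eq_empty_or_nonempty with he | hne
      · rw [he]; simp
      · set m := S.min' hne with hm
        have hmem : S.image Fin.val ⊆ Finset.Icc (m : ℕ) ((m : ℕ) + (n - 2 * k)) := by
          intro a ha
          simp only [Finset.mem_image] at ha
          obtain ⟨i, hi, rfl⟩ := ha
          rw [Finset.mem_Icc]
          have hmi : m ≤ i := S.min'_le i hi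
          have habs := hpair i hi m (S.min'_mem hne)
          rw [abs_le] at habs
          have hmi' : (m : ℕ) ≤ (i : ℕ) := hmi
          omega
        calc S.card = (S.image Fin.val).card :=
              (Finset.card_image_of_injective S Fin.val_injective).symm
          _ ≤ (Finset.Icc (m : ℕ) ((m : ℕ) + (n - 2 * k))).card :=
              Finset.card_le_card hmem
          _ = n - 2 * k + 1 := by rw [Nat.card_Icc]; omega
    omega
  have hMpos : 0 < M - ((1 : ℕ) - 1 : ℝ) := by
    rw [hM]; push_cast; linarith
  refine ⟨?_, ?_, ?_⟩
  · have h1 := main 1 le_rfl hMpos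
    have : (Finset.univ.filter (fun i => M - ((1:ℕ) - 1 : ℝ) ≤ g i)).Nonempty :=
      Finset.card_pos.mp (by omega)
    obtain ⟨i, hi⟩ := this
    have := (Finset.mem_filter.mp hi).2
    exact ⟨i, by push_cast at this; linarith⟩
  · intro k hk1 hkpos
    exact ⟨Finset.univ.filter (fun i => M - ((k : ℝ) - 1) ≤ g i), main k hk1 hkpos,
      fun i hi => (Finset.mem_filter.mp hi).2⟩
  · refine sorted_sum_lemma (by omega) g hgnn (fun k => M - ((k : ℝ) - 1)) ?_
    intro k hk1 _ hpos
    exact ⟨Finset.univ.filter (fun i => M - ((k : ℝ) - 1) ≤ g i), main k hk1 hpos,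
      fun i hi => (Finset.mem_filter.mp hi).2⟩
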